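/- Let N ≥ 1, a > 0, λ_ℓ ≥ 1 and δ_ℓ ∈ (-1, 0] for 1 ≤ ℓ ≤ N. Define g₀(x) = exp(|x|²_{-1}/(2a)) where |x|²_{-1} = Σ x_ℓ²/λ_ℓ, and let L̃ = Σ_ℓ λ_ℓ ( (a/2)(1+δ_ℓ) ∂_ℓ² - x_ℓ ∂_ℓ ). Then for every x ∈ ℝ^N, L̃ g₀(x) ≤ ((aN - |x|²)/(2a)) · exp(|x|²_{-1}/(2a)), and consequently L̃ g₀(x) ≤ (N/2) e^{N/2} for all x. -/

import Mathlib

noncomputable def pd {N : ℕ} (ℓ : Fin N) (f : (Fin N → ℝ) → ℝ) (x : Fin N → ℝ) : ℝ :=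
  fderiv ℝ f x (Pi.single ℓ 1)

lemma eval_sum_proj {N : ℕ} (c : Fin N → ℝ) (j : Fin N) :
    (∑ ℓ, c ℓ • ContinuousLinearMap.proj (R := ℝ) (φ := fun _ : Fin N => ℝ) ℓ)
      (Pi.single j 1) = c j := by
  rw [ContinuousLinearMap.sum_apply]
  rw [Finset.sum_eq_single j]
  · simp
  · intro b _ hb
    simp [Pi.single_eq_of_ne hb]
  · simp

lemma hasFDerivAt_expF {N : ℕ} (b : Fin N → ℝ) (x : Fin N → ℝ) :
    HasFDerivAt (fun x : Fin N → ℝ => Real.exp (∑ ℓ, b ℓ * x ℓ ^ 2))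
      ((Real.exp (∑ ℓ, b ℓ * x ℓ ^ 2)) •
        ∑ ℓ, (2 * b ℓ * x ℓ) • ContinuousLinearMap.proj (R := ℝ) (φ := fun _ : Fin N => ℝ) ℓ)
      x := by
  apply HasFDerivAt.exp
  apply HasFDerivAt.fun_sum
  intro ℓ _
  have hp := (ContinuousLinearMap.proj (R := ℝ) (φ := fun _ : Fin N => ℝ) ℓ).hasFDerivAt (x := x)
  have h2 := (hp.fun_mul hp).const_mul (b ℓ)
  simp only [ContinuousLinearMap.proj_apply] at h2
  have : (fun y : Fin N → ℝ => b ℓ * (y ℓ * y ℓ)) = fun y => b ℓ * y ℓ ^ 2 := by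
    funext y; ring
  rw [this] at h2
  convert h2 using 1
  · rfl
  simp [smul_smul, smul_add]
  module

lemma pd_expF {N : ℕ} (b : Fin N → ℝ) (j : Fin N) :
    pd j (fun x : Fin N → ℝ => Real.exp (∑ ℓ, b ℓ * x ℓ ^ 2)) =
      fun x => Real.exp (∑ ℓ, b ℓ * x ℓ ^ 2) * (2 * b j * x j) := by
  funext x
  unfold pd
  rw [(hasFDerivAt_expF b x).fderiv]
  rw [ContinuousLinearMap.smul_apply, eval_sum_proj]
  simp [smul_eq_mul]

lemma hasFDerivAt_lin {N : ℕ} (c : ℝ) (j : Fin N) (x : Fin N → ℝ) :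
    HasFDerivAt (fun x : Fin N → ℝ => c * x j)
      (c • ContinuousLinearMap.proj (R := ℝ) (φ := fun _ : Fin N => ℝ) j) x := by
  have hp := (ContinuousLinearMap.proj (R := ℝ) (φ := fun _ : Fin N => ℝ) j).hasFDerivAt (x := x)
  exact hp.const_mul c

lemma pd2_expF {N : ℕ} (b : Fin N → ℝ) (j : Fin N) (x : Fin N → ℝ) :
    pd j (pd j (fun x : Fin N → ℝ => Real.exp (∑ ℓ, b ℓ * x ℓ ^ 2))) x =
      Real.exp (∑ ℓ, b ℓ * x ℓ ^ 2) * (2 * b j) +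
        (2 * b j * x j) * (Real.exp (∑ ℓ, b ℓ * x ℓ ^ 2) * (2 * b j * x j)) := by
  rw [pd_expF]
  have h1 := hasFDerivAt_expF b x
  have h2 := hasFDerivAt_lin (2 * b j) j x
  have h := h1.fun_mul h2
  unfold pd
  rw [h.fderiv]
  simp only [ContinuousLinearMap.add_apply, ContinuousLinearMap.smul_apply, eval_sum_proj,
    ContinuousLinearMap.proj_apply, Pi.single_eq_same]
  simp [smul_eq_mul]

theorem stmt_6 {N : ℕ} (hN : 1 ≤ N) (a : ℝ) (ha : 0 < a)
    (lam : Fin N → ℝ) (hlam : ∀ ℓ, 1 ≤ lam ℓ)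
    (δ : Fin N → ℝ) (hδ : ∀ ℓ, δ ℓ ∈ Set.Ioc (-1 : ℝ) 0)
    (g0 : (Fin N → ℝ) → ℝ)
    (hg0 : ∀ x, g0 x = Real.exp ((∑ ℓ, (x ℓ) ^ 2 / lam ℓ) / (2 * a)))
    (x : Fin N → ℝ) :
    (∑ ℓ, lam ℓ * ((a / 2) * (1 + δ ℓ) * pd ℓ (pd ℓ g0) x - x ℓ * pd ℓ g0 x))
      ≤ ((a * N - ∑ ℓ, (x ℓ) ^ 2) / (2 * a)) *
          Real.exp ((∑ ℓ, (x ℓ) ^ 2 / lam ℓ) / (2 * a)) ∧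
    (∑ ℓ, lam ℓ * ((a / 2) * (1 + δ ℓ) * pd ℓ (pd ℓ g0) x - x ℓ * pd ℓ g0 x))
      ≤ (N / 2) * Real.exp (N / 2) := by
  have ha' : a ≠ 0 := ne_of_gt ha
  have hlam0 : ∀ ℓ, (0:ℝ) < lam ℓ := fun ℓ => lt_of_lt_of_le one_pos (hlam ℓ)
  set b : Fin N → ℝ := fun ℓ => (2 * a * lam ℓ)⁻¹ with hb
  have hsum_eq : ∀ y : Fin N → ℝ,
      (∑ ℓ, (y ℓ) ^ 2 / lam ℓ) / (2 * a) = ∑ ℓ, b ℓ * y ℓ ^ 2 := by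
    intro y
    rw [Finset.sum_div]
    refine Finset.sum_congr rfl fun ℓ _ => ?_
    rw [hb, inv_mul_eq_div, div_div]
    ring_nf
  have hgeq : g0 = fun y => Real.exp (∑ ℓ, b ℓ * y ℓ ^ 2) := by
    funext y
    rw [hg0, hsum_eq]
  set E : ℝ := Real.exp (∑ ℓ, b ℓ * x ℓ ^ 2) with hE
  have hEpos : 0 < E := Real.exp_pos _
  -- per-term identity
  have hterm : ∀ ℓ,
      lam ℓ * ((a / 2) * (1 + δ ℓ) * pd ℓ (pd ℓ g0) x - x ℓ * pd ℓ g0 x) =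
        E * ((1 + δ ℓ) * (1/2 + x ℓ ^ 2 / (2 * a * lam ℓ)) - x ℓ ^ 2 / a) := by
    intro ℓ
    rw [hgeq, pd2_expF, pd_expF]
    have h2 : (2 * a * lam ℓ) ≠ 0 := ne_of_gt (mul_pos (by positivity) (hlam0 ℓ))
    have hbl : b ℓ = (2 * a * lam ℓ)⁻¹ := rfl
    simp only [← hE, hbl]
    clear_value E
    have hl : lam ℓ ≠ 0 := (hlam0 ℓ).ne'
    field_simp
  -- per-term bound
  have hbound : ∀ ℓ ∈ Finset.univ,
      lam ℓ * ((a / 2) * (1 + δ ℓ) * pd ℓ (pd ℓ g0) x - x ℓ * pd ℓ g0 x) ≤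
        E * (1/2 - x ℓ ^ 2 / (2 * a)) := by
    intro ℓ _
    rw [hterm ℓ]
    apply mul_le_mul_of_nonneg_left _ hEpos.le
    have hδℓ := hδ ℓ
    have hd : (0:ℝ) < 2 * a * lam ℓ := mul_pos (by positivity) (hlam0 ℓ)
    have h1 : x ℓ ^ 2 / (2 * a * lam ℓ) ≤ x ℓ ^ 2 / (2 * a) := by
      apply div_le_div_of_nonneg_left (sq_nonneg _) (by positivity : (0:ℝ) < 2 * a)
      nlinarith [hlam ℓ]
    have h2 : (1 + δ ℓ) * (1/2 + x ℓ ^ 2 / (2 * a * lam ℓ)) ≤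
        1/2 + x ℓ ^ 2 / (2 * a * lam ℓ) := by
      apply mul_le_of_le_one_left _ (by linarith [hδℓ.2])
      have := hd
      positivity
    have h3 : x ℓ ^ 2 / a = 2 * (x ℓ ^ 2 / (2 * a)) := by
      field_simp
    linarith
  have hmain := Finset.sum_le_sum hbound
  have hsum2 : ∑ ℓ, E * (1/2 - x ℓ ^ 2 / (2 * a)) =
      ((a * N - ∑ ℓ, (x ℓ) ^ 2) / (2 * a)) * E := by
    rw [← Finset.mul_sum, Finset.sum_sub_distrib, Finset.sum_const, ← Finset.sum_div]
    simp only [Finset.card_univ, Fintype.card_fin, nsmul_eq_mul]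
    field_simp
  have hEeq : Real.exp ((∑ ℓ, (x ℓ) ^ 2 / lam ℓ) / (2 * a)) = E := by
    rw [hsum_eq]
  constructor
  · rw [hEeq]
    calc _ ≤ ∑ ℓ, E * (1/2 - x ℓ ^ 2 / (2 * a)) := hmain
    _ = _ := hsum2
  · refine le_trans (le_trans hmain (le_of_eq hsum2)) ?_
    rw [← hEeq]
    set S := ∑ ℓ, (x ℓ) ^ 2 with hS
    have hS0 : 0 ≤ S := Finset.sum_nonneg fun ℓ _ => sq_nonneg _
    have hQS : (∑ ℓ, (x ℓ) ^ 2 / lam ℓ) ≤ S := by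
      apply Finset.sum_le_sum
      intro ℓ _
      exact div_le_self (sq_nonneg _) (hlam ℓ)
    have hQ0 : 0 ≤ ∑ ℓ, (x ℓ) ^ 2 / lam ℓ :=
      Finset.sum_nonneg fun ℓ _ => div_nonneg (sq_nonneg _) (hlam0 ℓ).le
    rcases le_or_gt S (a * N) with hc | hc
    · apply mul_le_mul
      · rw [div_le_iff₀ (by positivity)]
        ring_nf
        nlinarith
      · apply Real.exp_le_exp.2
        rw [div_le_iff₀ (by positivity)]
        nlinarith
      · positivity
      · positivity
    · have h1 : (a * N - S) / (2 * a) < 0 := by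
        apply div_neg_of_neg_of_pos (by linarith) (by positivity)
      have h2 : ((a * N - S) / (2 * a)) * Real.exp ((∑ ℓ, (x ℓ) ^ 2 / lam ℓ) / (2 * a)) ≤ 0 :=
        mul_nonpos_of_nonpos_of_nonneg h1.le (Real.exp_pos _).le
      refine le_trans h2 (by positivity)
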